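/- Let P be a slicing of a triangulated category D satisfying the octahedral axiom, and let U → X → V →⁺ be a distinguished triangle in D in which U and V are nonzero objects each admitting a Harder–Narasimhan filtration, and φ₋(U) > φ₊(V). Then X admits a Harder–Narasimhan filtration whose sequence of semistable factors (with their phases) is the concatenation of the sequence of semistable factors of U followed by that of V; in particular φ₊(X) = φ₊(U) and φ₋(X) = φ₋(V). -/

import Mathlib

open CategoryTheory CategoryTheory.Limits CategoryTheory.Pretriangulated

universe v u

variable (D : Type u) [Category.{v} D] [HasZeroObject D] [HasShift D ℤ] [Preadditive D]
  [∀ n : ℤ, (shiftFunctor D n).Additive] [Pretriangulated D]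

/-- A slicing `P` of a triangulated category `D`: for every real number `φ`, a full additive
subcategory `P φ` (given by a predicate on objects), closed under isomorphisms, such that
(i) `P (φ + 1) = P φ ⟦1⟧` and (ii) `Hom(A₁, A₂) = 0` whenever `A₁ ∈ P φ₁`, `A₂ ∈ P φ₂` and
`φ₁ > φ₂`. -/
structure Slicing where
  /-- the objects of the slice with phase `φ` -/
  P : ℝ → D → Prop
  mem_of_iso : ∀ {φ : ℝ} {X Y : D}, (X ≅ Y) → P φ X → P φ Y
  zero_mem : ∀ (φ : ℝ) (X : D), IsZero X → P φ X
  sum_mem : ∀ (φ : ℝ) (X Y : D), P φ X → P φ Y → P φ (X ⊞ Y)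
  shift_mem : ∀ (φ : ℝ) (X : D), P φ X → P (φ + 1) (X⟦(1 : ℤ)⟧)
  shift_mem' : ∀ (φ : ℝ) (X : D), P (φ + 1) (X⟦(1 : ℤ)⟧) → P φ X
  hom_zero : ∀ {φ₁ φ₂ : ℝ}, φ₂ < φ₁ → ∀ {A₁ A₂ : D}, P φ₁ A₁ → P φ₂ A₂ →
    ∀ f : A₁ ⟶ A₂, f = 0

variable {D}

/-- A Harder–Narasimhan filtration of a (necessarily nonzero) object `X` with respect to a
slicing `S`: a finite collection of distinguished triangles
`F (j+1) → F j → A j →⁺ (F (j+1))⟦1⟧` for `0 ≤ j ≤ n`, with `F 0 = X`, `F (n+1) = 0`, where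
each `A j` is a nonzero object of `S.P (phase j)` and
`phase n > phase (n-1) > ⋯ > phase 0`.
(The semistable HN-factors are `A n, …, A 0`; `φ₊(X) = phase n` and `φ₋(X) = phase 0`.) -/
structure HNFiltration (S : Slicing D) (X : D) where
  /-- the number of steps: there are `n + 1` HN-factors `A 0, …, A n` -/
  n : ℕ
  /-- the filtration objects -/
  F : ℕ → D
  /-- the semistable factors -/
  A : ℕ → D
  /-- the phases of the factors -/
  phase : ℕ → ℝ
  f : ∀ j : ℕ, F (j + 1) ⟶ F j
  g : ∀ j : ℕ, F j ⟶ A j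
  h : ∀ j : ℕ, A j ⟶ (F (j + 1))⟦(1 : ℤ)⟧
  F_zero : F 0 = X
  isZero_top : IsZero (F (n + 1))
  mem : ∀ j ≤ n, S.P (phase j) (A j)
  nonzero : ∀ j ≤ n, ¬ IsZero (A j)
  dist : ∀ j ≤ n, (Triangle.mk (f j) (g j) (h j) ∈ distTriang D)
  phase_lt : ∀ j : ℕ, j + 1 ≤ n → phase j < phase (j + 1)

/-!
STATEMENT 4:
Let `U → X → V →⁺` be a distinguished triangle where `U`, `V` are nonzero objects admitting
Harder–Narasimhan filtrations and `φ₋(U) > φ₊(V)`. Then `X` admits a Harder–Narasimhan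
filtration whose sequence of semistable factors (with phases) is the concatenation of that of
`U` followed by that of `V`; in particular `φ₊(X) = φ₊(U)` and `φ₋(X) = φ₋(V)`.
-/

section Aux

variable [IsTriangulated D]

/-- Transport a distinguished triangle along isomorphisms of its three objects. -/
lemma dist_of_iso {T : Triangle D} (hT : T ∈ distTriang D) {X Y Z : D}
    (e₁ : T.obj₁ ≅ X) (e₂ : T.obj₂ ≅ Y) (e₃ : T.obj₃ ≅ Z) :
    Triangle.mk (e₁.inv ≫ T.mor₁ ≫ e₂.hom) (e₂.inv ≫ T.mor₂ ≫ e₃.hom)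
      (e₃.inv ≫ T.mor₃ ≫ e₁.hom⟦(1 : ℤ)⟧') ∈ distTriang D := by
  refine isomorphic_distinguished _ hT _ ?_
  refine Triangle.isoMk _ _ e₁.symm e₂.symm e₃.symm ?_ ?_ ?_
  · show (e₁.inv ≫ T.mor₁ ≫ e₂.hom) ≫ e₂.inv = e₁.inv ≫ T.mor₁
    simp
  · show (e₂.inv ≫ T.mor₂ ≫ e₃.hom) ≫ e₃.inv = e₂.inv ≫ T.mor₂
    simp
  · show (e₃.inv ≫ T.mor₃ ≫ e₁.hom⟦(1 : ℤ)⟧') ≫ e₁.inv⟦(1 : ℤ)⟧' = e₃.inv ≫ T.mor₃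
    simp

lemma exists_dist {T : Triangle D} (hT : T ∈ distTriang D) {X Y Z : D}
    (e₁ : T.obj₁ ≅ X) (e₂ : T.obj₂ ≅ Y) (e₃ : T.obj₃ ≅ Z) :
    ∃ (f : X ⟶ Y) (g : Y ⟶ Z) (h : Z ⟶ X⟦(1 : ℤ)⟧), Triangle.mk f g h ∈ distTriang D :=
  ⟨_, _, _, dist_of_iso hT e₁ e₂ e₃⟩

/-- Extend a Harder–Narasimhan filtration by one semistable factor at the bottom. -/
def HNFiltration.extendBot (S : Slicing D) {Y X B : D} (H : HNFiltration S Y) (φ : ℝ)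
    (hB : S.P φ B) (hBnz : ¬ IsZero B) (hφ : φ < H.phase 0)
    {f₀ : H.F 0 ⟶ X} {g₀ : X ⟶ B} {h₀ : B ⟶ (H.F 0)⟦(1 : ℤ)⟧}
    (hT : Triangle.mk f₀ g₀ h₀ ∈ distTriang D) : HNFiltration S X where
  n := H.n + 1
  F := fun j => match j with
    | 0 => X
    | (j + 1) => H.F j
  A := fun j => match j with
    | 0 => B
    | (j + 1) => H.A j
  phase := fun j => match j with
    | 0 => φ
    | (j + 1) => H.phase j
  f := fun j => match j with
    | 0 => f₀
    | (j + 1) => H.f j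
  g := fun j => match j with
    | 0 => g₀
    | (j + 1) => H.g j
  h := fun j => match j with
    | 0 => h₀
    | (j + 1) => H.h j
  F_zero := rfl
  isZero_top := H.isZero_top
  mem := by rintro (_ | j) hj
            exacts [hB, H.mem j (by omega)]
  nonzero := by rintro (_ | j) hj
                exacts [hBnz, H.nonzero j (by omega)]
  dist := by rintro (_ | j) hj
             exacts [hT, H.dist j (by omega)]
  phase_lt := by rintro (_ | j) hj
                 exacts [hφ, H.phase_lt j (by omega)]

/-- Truncate the bottom semistable factor of a Harder–Narasimhan filtration. -/
def HNFiltration.truncBot (S : Slicing D) {V : D} (H : HNFiltration S V) (m : ℕ)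
    (hm : H.n = m + 1) : HNFiltration S (H.F 1) where
  n := m
  F := fun j => H.F (j + 1)
  A := fun j => H.A (j + 1)
  phase := fun j => H.phase (j + 1)
  f := fun j => H.f (j + 1)
  g := fun j => H.g (j + 1)
  h := fun j => H.h (j + 1)
  F_zero := rfl
  isZero_top := by have := H.isZero_top; rw [hm] at this; exact this
  mem := fun j hj => H.mem (j + 1) (by omega)
  nonzero := fun j hj => H.nonzero (j + 1) (by omega)
  dist := fun j hj => H.dist (j + 1) (by omega)
  phase_lt := fun j hj => H.phase_lt (j + 1) (by omega)

/-- Octahedron construction: given `U → X → V` and `V₁ → V → B` distinguished, there is an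
object `X₁` with distinguished triangles `U → X₁ → V₁` and `X₁ → X → B`. -/
lemma octa {U X V V₁ B : D} {u : U ⟶ X} {v : X ⟶ V} {w : V ⟶ U⟦(1 : ℤ)⟧}
    (hT : Triangle.mk u v w ∈ distTriang D)
    {f : V₁ ⟶ V} {g : V ⟶ B} {h : B ⟶ V₁⟦(1 : ℤ)⟧}
    (hT' : Triangle.mk f g h ∈ distTriang D) :
    ∃ (X₁ : D) (a : U ⟶ X₁) (b : X₁ ⟶ V₁) (c : V₁ ⟶ U⟦(1 : ℤ)⟧)
      (f' : X₁ ⟶ X) (g' : X ⟶ B) (h' : B ⟶ X₁⟦(1 : ℤ)⟧),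
      (Triangle.mk a b c ∈ distTriang D) ∧ (Triangle.mk f' g' h' ∈ distTriang D) := by
  obtain ⟨Z, g₁, h₁, hZ⟩ := distinguished_cocone_triangle (v ≫ g)
  have h12 : Triangle.mk v w (-u⟦(1 : ℤ)⟧') ∈ distTriang D := rot_of_distTriang _ hT
  have h23 : Triangle.mk g h (-f⟦(1 : ℤ)⟧') ∈ distTriang D := rot_of_distTriang _ hT'
  have oct := Triangulated.someOctahedron rfl h12 h23 hZ
  have d1 := inv_rot_of_distTriang _ oct.mem
  have d2 := inv_rot_of_distTriang _ d1
  have d3 := inv_rot_of_distTriang _ d2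
  obtain ⟨a, b, c, habc⟩ := exists_dist d3 (shiftShiftNeg U (1 : ℤ)) (Iso.refl (Z⟦(-1 : ℤ)⟧))
    (shiftShiftNeg V₁ (1 : ℤ))
  obtain ⟨f', g', h', hf'⟩ := exists_dist (inv_rot_of_distTriang _ hZ)
    (Iso.refl (Z⟦(-1 : ℤ)⟧)) (Iso.refl X) (Iso.refl B)
  exact ⟨Z⟦(-1 : ℤ)⟧, a, b, c, f', g', h', habc, hf'⟩

lemma aux_statement4 (S : Slicing D) (N : ℕ) :
    ∀ {U X V : D} (HU : HNFiltration S U) (HV : HNFiltration S V), HV.n = N →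
    ∀ (u : U ⟶ X) (v : X ⟶ V) (w : V ⟶ U⟦(1 : ℤ)⟧),
      (Triangle.mk u v w ∈ distTriang D) → HV.phase HV.n < HU.phase 0 →
    ∃ HX : HNFiltration S X, HX.n = HU.n + HV.n + 1 ∧
      (∀ j ≤ HV.n, HX.phase j = HV.phase j ∧ Nonempty (HX.A j ≅ HV.A j)) ∧
      (∀ i ≤ HU.n, HX.phase (HV.n + 1 + i) = HU.phase i ∧
        Nonempty (HX.A (HV.n + 1 + i) ≅ HU.A i)) ∧
      HX.phase HX.n = HU.phase HU.n ∧ HX.phase 0 = HV.phase 0 := by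
  induction N with
  | zero =>
    intro U X V HU HV hN u v w hT hφ
    rw [hN] at hφ
    have h1 : IsZero (HV.F (0 + 1)) := by
      have := HV.isZero_top; rw [hN] at this; exact this
    have hd := HV.dist 0 (by omega)
    have hiso : IsIso (HV.g 0) := (Triangle.isZero₁_iff_isIso₂ _ hd).1 h1
    have e : V ≅ HV.A 0 := eqToIso HV.F_zero.symm ≪≫ asIso (HV.g 0)
    refine ⟨HNFiltration.extendBot S HU (HV.phase 0) (HV.mem 0 (by omega))
      (HV.nonzero 0 (by omega)) hφ
      (dist_of_iso hT (eqToIso HU.F_zero.symm) (Iso.refl X) e), ?_, ?_, ?_, ?_, ?_⟩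
    · show HU.n + 1 = HU.n + HV.n + 1
      omega
    · intro j hj
      have : j = 0 := by omega
      subst this
      exact ⟨rfl, ⟨Iso.refl _⟩⟩
    · intro i hi
      have harith : HV.n + 1 + i = i + 1 := by omega
      rw [harith]
      exact ⟨rfl, ⟨Iso.refl _⟩⟩
    · rfl
    · rfl
  | succ m IH =>
    intro U X V HU HV hN u v w hT hφ
    obtain ⟨f₁, g₁, h₁, hd0⟩ := exists_dist (HV.dist 0 (by omega)) (Iso.refl (HV.F (0 + 1)))
      (eqToIso HV.F_zero) (Iso.refl (HV.A 0))
    obtain ⟨X₁, a, b, c, f', g', h', hab, hfg⟩ := octa hT hd0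
    have HV₁ := HNFiltration.truncBot S HV m hN
    have hφ' : HV.phase (m + 1) < HU.phase 0 := by rw [hN] at hφ; exact hφ
    obtain ⟨H₁, hn₁, hP1, hP2, htop, hbot⟩ :=
      IH HU (HNFiltration.truncBot S HV m hN) rfl a b c hab hφ'
    have hφ0 : HV.phase 0 < H₁.phase 0 := by
      have h1 := (hP1 0 (by omega)).1
      have h01 := HV.phase_lt 0 (by omega)
      rw [h1]
      exact h01
    refine ⟨HNFiltration.extendBot S H₁ (HV.phase 0) (HV.mem 0 (by omega))
      (HV.nonzero 0 (by omega)) hφ0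
      (dist_of_iso hfg (eqToIso H₁.F_zero.symm) (Iso.refl X) (Iso.refl (HV.A 0))),
      ?_, ?_, ?_, ?_, ?_⟩
    · show H₁.n + 1 = HU.n + HV.n + 1
      have e2 : (HNFiltration.truncBot S HV m hN).n = m := rfl
      omega
    · rintro (_ | k) hj
      · exact ⟨rfl, ⟨Iso.refl _⟩⟩
      · have hk : k ≤ (HNFiltration.truncBot S HV m hN).n := by
          have : (HNFiltration.truncBot S HV m hN).n = m := rfl
          omega
        exact ⟨(hP1 k hk).1, (hP1 k hk).2⟩
    · intro i hi
      have harith : HV.n + 1 + i = ((HNFiltration.truncBot S HV m hN).n + 1 + i) + 1 := by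
        have : (HNFiltration.truncBot S HV m hN).n = m := rfl
        omega
      rw [harith]
      exact ⟨(hP2 i hi).1, (hP2 i hi).2⟩
    · exact htop
    · rfl

end Aux

theorem statement4
    {D : Type u} [Category.{v} D] [HasZeroObject D] [HasShift D ℤ] [Preadditive D]
    [∀ n : ℤ, (shiftFunctor D n).Additive] [Pretriangulated D] [IsTriangulated D]
    (S : Slicing D) {U X V : D} (hU : ¬ IsZero U) (hV : ¬ IsZero V)
    (HU : HNFiltration S U) (HV : HNFiltration S V)
    (u : U ⟶ X) (v : X ⟶ V) (w : V ⟶ U⟦(1 : ℤ)⟧)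
    (hT : Triangle.mk u v w ∈ distTriang D)
    (hφ : HV.phase HV.n < HU.phase 0) :
    ∃ HX : HNFiltration S X, HX.n = HU.n + HV.n + 1 ∧
      (∀ j ≤ HV.n, HX.phase j = HV.phase j ∧ Nonempty (HX.A j ≅ HV.A j)) ∧
      (∀ i ≤ HU.n, HX.phase (HV.n + 1 + i) = HU.phase i ∧
        Nonempty (HX.A (HV.n + 1 + i) ≅ HU.A i)) ∧
      HX.phase HX.n = HU.phase HU.n ∧ HX.phase 0 = HV.phase 0 := by
  exact aux_statement4 S HV.n HU HV rfl u v w hT hφ
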